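/- Let A be a finite set with |A| = q ≥ 2 and let m ≥ n ≥ 1. There is no transformation f : A^m → A^m that simulates in parallel every transformation of A^n; that is, there is no f such that for every g : A^n → A^n there exists k ≥ 1 with g(pr(x)) = pr(f^k(x)) for all x ∈ A^m. -/
import Mathlib


/-- Projection of `A^m` onto the first `n` coordinates. -/
def pr {A : Type*} {m n : ℕ} (hmn : n ≤ m) (x : Fin m → A) : Fin n → A :=
  fun i => x (Fin.castLE hmn i)

/-- There is no transformation `f` of `A^m` that simulates in parallel every
transformation of `A^n`: no `f` such that for every `g : A^n → A^n` there is `k ≥ 1`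
with `g (pr x) = pr (f^[k] x)` for all `x`. -/
theorem no_parallel_universal (q n m : ℕ) (hq : 2 ≤ q) (hn : 1 ≤ n) (hmn : n ≤ m)
    (A : Type*) [Fintype A] (hA : Fintype.card A = q) :
    ¬ ∃ f : (Fin m → A) → Fin m → A,
        ∀ g : (Fin n → A) → Fin n → A,
          ∃ k : ℕ, 1 ≤ k ∧ ∀ x, g (pr hmn x) = pr hmn (f^[k] x) := by
  rintro ⟨f, hf⟩
  have hcard : 1 < Fintype.card A := by omega
  obtain ⟨a, b, hab⟩ := Fintype.one_lt_card_iff.mp hcard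
  obtain ⟨k₁, -, h₁⟩ := hf (fun _ _ => a)
  obtain ⟨k₂, -, h₂⟩ := hf (fun _ _ => b)
  have hx : ∀ x : Fin m → A, (fun _ : Fin n => a) = (fun _ : Fin n => b) := by
    intro x
    have e1 : pr hmn (f^[k₁ + k₂] x) = fun _ => a := by
      rw [Function.iterate_add_apply]
      exact (h₁ (f^[k₂] x)).symm
    have e2 : pr hmn (f^[k₁ + k₂] x) = fun _ => b := by
      rw [Nat.add_comm, Function.iterate_add_apply]
      exact (h₂ (f^[k₁] x)).symm
    rw [← e1, e2]
  have : a = b := congrFun (hx (fun _ => a)) ⟨0, hn⟩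
  exact hab this
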